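/- Let ℓ² be the real Hilbert space of square-summable sequences indexed by ℕ, and let P : ℓ² → ℓ² be the metric projection onto the positive cone, given coordinatewise by (P x)_i = max(x_i, 0). Let M be a nonempty finite subset of ℕ with complement M̄, and let x̄ ∈ ℓ² satisfy x̄_i > 0 for all i ∈ M and x̄_i = 0 for all i ∈ M̄. Then the fixed-point set of the Mordukhovich differential operator D̂*P(x̄) is exactly K_{M̄} = {y ∈ ℓ² : y_i ≥ 0 for all i ∈ M̄}; that is, y ∈ ℓ² satisfies y ∈ D̂*P(x̄)(y) if and only if y_i ≥ 0 for every i ∉ M. -/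

import Mathlib

open scoped RealInnerProductSpace ENNReal

/-- Let `ℓ²` be the real Hilbert space of square-summable sequences
and `P : ℓ² → ℓ²` the metric projection onto the positive cone, given coordinatewise
by `(P x) i = max (x i) 0`.  Let `M` be a nonempty finite subset of `ℕ` and let `x̄`
satisfy `x̄ i > 0` for `i ∈ M` and `x̄ i = 0` for `i ∉ M`.  Then the fixed-point set
of the Mordukhovich differential operator `D̂*P(x̄)` is exactly
`K_M̄ = {y : y i ≥ 0 for all i ∉ M}`. -/
theorem mordFixedPoints_positive_cone_l2
    (P : lp (fun _ : ℕ => ℝ) 2 → lp (fun _ : ℕ => ℝ) 2)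
    (hP : ∀ u i, P u i = max (u i) 0)
    (M : Finset ℕ) (hM : M.Nonempty)
    (xbar : lp (fun _ : ℕ => ℝ) 2)
    (hpos : ∀ i ∈ M, 0 < xbar i) (hzero : ∀ i ∉ M, xbar i = 0) :
    ∀ y : lp (fun _ : ℕ => ℝ) 2,
      ((∀ ε > (0 : ℝ), ∃ δ > (0 : ℝ), ∀ u, ‖u - xbar‖ < δ →
          ⟪y, u - xbar⟫ - ⟪y, P u - P xbar⟫ ≤ ε * (‖u - xbar‖ + ‖P u - P xbar‖))
        ↔ ∀ i ∉ M, 0 ≤ y i) := by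
  intro y
  have hxnn : ∀ i, 0 ≤ xbar i := by
    intro i
    by_cases hi : i ∈ M
    · exact (hpos i hi).le
    · exact (hzero i hi).ge
  have hPx : P xbar = xbar := by
    apply lp.ext
    funext i
    rw [hP]
    exact max_eq_left (hxnn i)
  constructor
  · intro h j hj
    by_contra hneg
    push_neg at hneg
    obtain ⟨δ, hδ, hd⟩ := h (-(y j) / 2) (by linarith)
    set t : ℝ := min (δ / 2) 1 with ht
    have ht0 : 0 < t := lt_min (by linarith) one_pos
    set u : lp (fun _ : ℕ => ℝ) 2 := xbar + lp.single 2 j (-t) with hu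
    have husub : u - xbar = lp.single 2 j (-t) := by rw [hu]; abel
    have hnorm : ‖u - xbar‖ = t := by
      rw [husub]
      have := lp.norm_single (p := 2) (E := fun _ : ℕ => ℝ)
        (by norm_num : (0:ℝ≥0∞) < 2) j (-t : ℝ)
      rw [this, norm_neg, Real.norm_eq_abs, abs_of_pos ht0]
    have hPu : P u = P xbar := by
      apply lp.ext
      funext i
      rw [hP, hP]
      by_cases hij : i = j
      · subst hij
        have : u i = -t := by
          have : u i = xbar i + (lp.single (E := fun _ : ℕ => ℝ) 2 i (-t)) i := by
            rw [hu]; exact lp.coeFn_add xbar (lp.single 2 i (-t)) ▸ rfl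
          rw [this, hzero i hj, lp.single_apply_self (E := fun _ : ℕ => ℝ), zero_add]
        rw [this, hzero i hj]
        simp [le_of_lt ht0]
      · have : u i = xbar i := by
          have h1 : u i = xbar i + (lp.single (E := fun _ : ℕ => ℝ) 2 j (-t)) i := by
            rw [hu]; exact lp.coeFn_add xbar (lp.single 2 j (-t)) ▸ rfl
          rw [h1, lp.single_apply_ne (E := fun _ : ℕ => ℝ) 2 j (-t) hij, add_zero]
        rw [this]
    have hlt : ‖u - xbar‖ < δ := by
      rw [hnorm]; calc t ≤ δ / 2 := min_le_left _ _
        _ < δ := by linarith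
    have hkey := hd u hlt
    rw [hPu, sub_self, inner_zero_right, norm_zero, add_zero, hnorm] at hkey
    have hin : ⟪y, u - xbar⟫ = -t * y j := by
      rw [husub, lp.inner_eq_tsum]
      rw [tsum_eq_single j]
      · simp [lp.single_apply_self (E := fun _ : ℕ => ℝ), RCLike.inner_apply, mul_comm]
      · intro i hij
        rw [lp.single_apply_ne (E := fun _ : ℕ => ℝ) 2 j (-t) hij]
        simp
    rw [hin] at hkey
    nlinarith
  · intro hy ε hε
    set δ : ℝ := M.inf' hM (fun i => xbar i) with hδdef
    have hδ0 : 0 < δ := by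
      rw [hδdef, Finset.lt_inf'_iff]
      exact hpos
    refine ⟨δ, hδ0, fun u hu => ?_⟩
    have key : ⟪y, u - xbar⟫ - ⟪y, P u - P xbar⟫ ≤ 0 := by
      rw [← inner_sub_right, lp.inner_eq_tsum]
      apply tsum_nonpos
      intro i
      have hwi : ((u - xbar - (P u - P xbar)) : lp (fun _ : ℕ => ℝ) 2) i
          = (u i - max (u i) 0) := by
        have h1 : ((u - xbar - (P u - P xbar)) : lp (fun _ : ℕ => ℝ) 2) i
            = (u i - xbar i) - (P u i - P xbar i) := by
          simp [lp.coeFn_sub, Pi.sub_apply]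
        rw [h1, hP, hP, max_eq_left (hxnn i)]
        ring
      rw [hwi]
      by_cases hi : i ∈ M
      · have hle : |u i - xbar i| ≤ ‖u - xbar‖ := by
          have := lp.norm_apply_le_norm (E := fun _ : ℕ => ℝ) two_ne_zero (u - xbar) i
          rwa [lp.coeFn_sub, Pi.sub_apply, Real.norm_eq_abs] at this
        have hxi : δ ≤ xbar i := Finset.inf'_le _ hi
        have hui : 0 < u i := by
          have := abs_lt.mp (hle.trans_lt hu)
          linarith [this.1]
        rw [max_eq_left hui.le, sub_self]
        simp
      · have h1 : u i - max (u i) 0 ≤ 0 := by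
          cases le_or_gt (u i) 0 with
          | inl h => rw [max_eq_right h]; linarith
          | inr h => rw [max_eq_left h.le]; linarith
        have := hy i hi
        simp only [RCLike.inner_apply, starRingEnd_apply, star_trivial]
        linarith [mul_nonpos_of_nonneg_of_nonpos this h1]
    have : 0 ≤ ε * (‖u - xbar‖ + ‖P u - P xbar‖) :=
      mul_nonneg hε.le (add_nonneg (norm_nonneg _) (norm_nonneg _))
    linarith
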